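/- For all x with 0 < x < π, (π² − x²)/(π² + x²) < cos(x/2). -/

import Mathlib

open Real

private lemma f_deriv : deriv (fun u : ℝ => 4 * u * Real.cos u - π * Real.sin u)
    = fun u => (4 - π) * Real.cos u - 4 * u * Real.sin u := by
  funext u
  have h : HasDerivAt (fun u : ℝ => 4 * u * Real.cos u - π * Real.sin u)
      ((4 - π) * Real.cos u - 4 * u * Real.sin u) u := by
    have h1 : HasDerivAt (fun u : ℝ => 4 * u * Real.cos u)
        (4 * Real.cos u + 4 * u * (-Real.sin u)) u := by
      have := ((hasDerivAt_id' u).const_mul (4:ℝ)).mul (Real.hasDerivAt_cos u)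
      refine this.congr_deriv ?_; ring
    have h2 : HasDerivAt (fun u : ℝ => π * Real.sin u) (π * Real.cos u) u :=
      (Real.hasDerivAt_sin u).const_mul π
    have := h1.sub h2
    refine this.congr_deriv ?_
    ring
  exact h.deriv

private lemma key (u : ℝ) (h0 : 0 < u) (h1 : u < π / 4) :
    π * Real.sin u < 4 * u * Real.cos u := by
  have hpi := Real.pi_pos
  set f : ℝ → ℝ := fun u : ℝ => 4 * u * Real.cos u - π * Real.sin u with hf
  have hconc : StrictConcaveOn ℝ (Set.Icc 0 (π / 4)) f := by
    apply strictConcaveOn_of_deriv2_neg (convex_Icc _ _)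
    · exact (Continuous.sub (by continuity) (by continuity)).continuousOn
    · intro y hy
      rw [interior_Icc] at hy
      have hy0 : 0 < y := hy.1
      have hy1 : y < π / 4 := hy.2
      have hsin : 0 < Real.sin y := Real.sin_pos_of_pos_of_lt_pi hy0 (by linarith)
      have hcos : 0 < Real.cos y := Real.cos_pos_of_mem_Ioo ⟨by linarith, by linarith⟩
      have hd2 : deriv^[2] f y = (π - 8) * Real.sin y - 4 * y * Real.cos y := by
        have : deriv^[2] f = deriv (deriv f) := by
          simp [Function.iterate_succ]
        rw [this, hf, f_deriv]
        have h : HasDerivAt (fun u : ℝ => (4 - π) * Real.cos u - 4 * u * Real.sin u)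
            ((π - 8) * Real.sin y - 4 * y * Real.cos y) y := by
          have h1 : HasDerivAt (fun u : ℝ => (4 - π) * Real.cos u)
              ((4 - π) * (-Real.sin y)) y := (Real.hasDerivAt_cos y).const_mul _
          have h2 : HasDerivAt (fun u : ℝ => 4 * u * Real.sin u)
              (4 * Real.sin y + 4 * y * Real.cos y) y := by
            have := ((hasDerivAt_id' y).const_mul (4:ℝ)).mul (Real.hasDerivAt_sin y)
            refine this.congr_deriv ?_; ring
          have := h1.sub h2
          refine this.congr_deriv ?_
          ring
        exact h.deriv
      rw [hd2]
      nlinarith [Real.pi_lt_d2]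
  have h0' : (0:ℝ) ∈ Set.Icc 0 (π / 4) := ⟨le_refl _, by positivity⟩
  have h1' : (π / 4) ∈ Set.Icc 0 (π / 4) := ⟨by positivity, le_refl _⟩
  have hne : (0:ℝ) ≠ π / 4 := by positivity
  have ha : 0 < 1 - 4 * u / π := by
    rw [sub_pos, div_lt_one hpi]; linarith
  have hb : 0 < 4 * u / π := by positivity
  have hab : (1 - 4 * u / π) + 4 * u / π = 1 := by ring
  have := hconc.2 h0' h1' hne ha hb hab
  have hcomb : (1 - 4 * u / π) • (0:ℝ) + (4 * u / π) • (π / 4) = u := by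
    simp only [smul_eq_mul]
    field_simp
    ring
  rw [hcomb] at this
  have hf0 : f 0 = 0 := by simp [hf]
  have hfq : f (π / 4) = 0 := by
    simp [hf, Real.cos_pi_div_four, Real.sin_pi_div_four]
    ring
  have hfu : 0 < f u := by
    have := this
    rw [hf0, hfq] at this
    simpa using this
  simp only [hf] at hfu
  linarith

theorem redheffer_cos (x : ℝ) (hx : 0 < x) (hxpi : x < π) :
    (π ^ 2 - x ^ 2) / (π ^ 2 + x ^ 2) < Real.cos (x / 2) := by
  have hpi := Real.pi_pos
  have hden : 0 < π ^ 2 + x ^ 2 := by positivity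
  rw [div_lt_iff₀ hden]
  have hkey := key (x / 4) (by linarith) (by linarith)
  have hs : 0 < Real.sin (x / 4) := Real.sin_pos_of_pos_of_lt_pi (by linarith) (by linarith)
  have hc : 0 < Real.cos (x / 4) := Real.cos_pos_of_mem_Ioo ⟨by linarith, by linarith⟩
  have hkey' : π * Real.sin (x / 4) < x * Real.cos (x / 4) := by linarith
  have hsq : (π * Real.sin (x / 4)) ^ 2 < (x * Real.cos (x / 4)) ^ 2 := by
    apply sq_lt_sq' _ hkey'
    nlinarith
  have hcos2 : Real.cos (x / 2) = 2 * Real.cos (x / 4) ^ 2 - 1 := by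
    have h := Real.cos_sq (x / 4)
    rw [show 2 * (x / 4) = x / 2 by ring] at h
    linarith
  nlinarith [hsq, hcos2, Real.sin_sq_add_cos_sq (x / 4)]
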